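/- Let R = C⁰_{b,D,<∞}(D) for D = [a,b] with a < b, let x ∈ (a,b), and let N ∈ ℕ be such that 1/N < x − a. For each n ≥ N define f_n ∈ R by f_n(y) = 0 if y ∈ [x − 1/n, x) and f_n(y) = 1 otherwise, and let I be the ideal of R generated by {f_n : n ≥ N}. Then: (i) for every finite subset J ⊆ I, the intersection over f ∈ J of the zero sets Z(f) is nonempty; (ii) the intersection over all f ∈ I of Z(f) is empty; (iii) the intersection over all f ∈ I of the closures (in D) of Z(f) equals {x}. -/

import Mathlib

open Set Filter Topology

def pcAlg (W : Type*) [TopologicalSpace W] : Subalgebra ℝ (W → ℝ) where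
  carrier := {f | (∃ C, ∀ x, |f x| ≤ C) ∧ {x | ¬ ContinuousAt f x}.Finite}
  add_mem' := by
    rintro f g ⟨⟨Cf, hCf⟩, hf⟩ ⟨⟨Cg, hCg⟩, hg⟩
    refine ⟨⟨Cf + Cg, fun x => ?_⟩, (hf.union hg).subset fun x hx => ?_⟩
    · exact (abs_add_le _ _).trans (add_le_add (hCf x) (hCg x))
    · simp only [mem_union, mem_setOf_eq] at hx ⊢
      by_contra h
      push_neg at h
      exact hx (h.1.add h.2)
  mul_mem' := by
    rintro f g ⟨⟨Cf, hCf⟩, hf⟩ ⟨⟨Cg, hCg⟩, hg⟩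
    refine ⟨⟨max Cf 0 * max Cg 0, fun x => ?_⟩, (hf.union hg).subset fun x hx => ?_⟩
    · rw [Pi.mul_apply, abs_mul]
      exact mul_le_mul ((hCf x).trans (le_max_left _ _)) ((hCg x).trans (le_max_left _ _))
        (abs_nonneg _) (le_max_right _ _)
    · simp only [mem_union, mem_setOf_eq] at hx ⊢
      by_contra h
      push_neg at h
      exact hx (h.1.mul h.2)
  algebraMap_mem' := fun r => by
    refine ⟨⟨|r|, fun x => le_of_eq rfl⟩, Set.finite_empty.subset fun x hx => ?_⟩
    exact absurd continuousAt_const hx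

theorem continuousAt_ite_of_not_frontier {X : Type*} [TopologicalSpace X]
    (p : X → Prop) [DecidablePred p] {y : X} (h : y ∉ frontier {z | p z}) (c d : ℝ) :
    ContinuousAt (fun z => if p z then c else d) y := by
  rw [frontier, Set.mem_diff, not_and, not_not] at h
  by_cases hy : y ∈ closure {z | p z}
  · have hs : {z | p z} ∈ 𝓝 y := mem_interior_iff_mem_nhds.mp (h hy)
    have he : (fun _ : X => c) =ᶠ[𝓝 y] (fun z => if p z then c else d) := by
      filter_upwards [hs] with z hz
      simp [hz]
    exact continuousAt_const.congr he
  · have hy' : y ∈ interior {z | p z}ᶜ := by rw [interior_compl]; exact hy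
    have hs : {z | p z}ᶜ ∈ 𝓝 y := mem_interior_iff_mem_nhds.mp hy'
    have he : (fun _ : X => d) =ᶠ[𝓝 y] (fun z => if p z then c else d) := by
      filter_upwards [hs] with z hz
      simp only [Set.mem_compl_iff, Set.mem_setOf_eq] at hz
      simp [hz]
    exact continuousAt_const.congr he


theorem stepFun_mem (a b x : ℝ) (n : ℕ) :
    (fun y : ↥(Set.Icc a b) => if x - 1 / (n : ℝ) ≤ y.1 ∧ y.1 < x then (0 : ℝ) else 1) ∈
      pcAlg ↥(Set.Icc a b) := by
  constructor
  · exact ⟨1, fun y => by dsimp only; split_ifs <;> simp⟩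
  · have hfin : (Subtype.val ⁻¹' ({x - 1 / (n : ℝ), x} : Set ℝ) : Set ↥(Set.Icc a b)).Finite :=
      Set.Finite.preimage (Set.injOn_of_injective Subtype.val_injective)
        ((Set.finite_singleton x).insert _)
    refine hfin.subset fun y hy => ?_
    simp only [Set.mem_setOf_eq] at hy
    by_contra hmem
    apply hy
    apply continuousAt_ite_of_not_frontier
      (fun z : ↥(Set.Icc a b) => x - 1 / (n : ℝ) ≤ z.1 ∧ z.1 < x)
    intro hf
    have h1 : {z : ↥(Set.Icc a b) | x - 1 / (n : ℝ) ≤ z.1 ∧ z.1 < x} =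
        Subtype.val ⁻¹' Set.Ico (x - 1 / (n : ℝ)) x := rfl
    rw [h1] at hf
    have h2 := continuous_subtype_val.frontier_preimage_subset (Set.Ico (x - 1 / (n : ℝ)) x) hf
    apply hmem
    have h3 : frontier (Set.Ico (x - 1 / (n : ℝ)) x) ⊆ {x - 1 / (n : ℝ), x} := by
      by_cases hc : x - 1 / (n : ℝ) < x
      · rw [frontier_Ico hc]
      · rw [Set.Ico_eq_empty hc, frontier_empty]
        exact Set.empty_subset _
    exact h3 h2

/-- The function `f_n ∈ R` which is `0` on `[x - 1/n, x)` and `1` elsewhere. -/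
noncomputable def stepFun (a b x : ℝ) (n : ℕ) : ↥(pcAlg ↥(Set.Icc a b)) :=
  ⟨fun y => if x - 1 / (n : ℝ) ≤ y.1 ∧ y.1 < x then (0 : ℝ) else 1, stepFun_mem a b x n⟩

theorem vanish_lemma (a b x : ℝ) (N : ℕ) (hN : 0 < N)
    (g : ↥(pcAlg ↥(Set.Icc a b)))
    (hg : g ∈ (Ideal.span {f | ∃ n, N ≤ n ∧ f = stepFun a b x n} :
      Ideal ↥(pcAlg ↥(Set.Icc a b)))) :
    ∃ m : ℕ, N ≤ m ∧ ∀ y : ↥(Set.Icc a b), x - 1/(m:ℝ) ≤ y.1 → y.1 < x → g.1 y = 0 := by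
  induction hg using Submodule.span_induction with
  | mem f hf =>
      obtain ⟨n, hn, rfl⟩ := hf
      refine ⟨n, hn, fun y h1 h2 => ?_⟩
      show (if x - 1/(n:ℝ) ≤ y.1 ∧ y.1 < x then (0:ℝ) else 1) = 0
      rw [if_pos ⟨h1, h2⟩]
  | zero => exact ⟨N, le_rfl, fun y _ _ => rfl⟩
  | add f g _ _ ihf ihg =>
      obtain ⟨m1, hm1, h1⟩ := ihf
      obtain ⟨m2, hm2, h2⟩ := ihg
      refine ⟨max m1 m2, hm1.trans (le_max_left _ _), fun y hy1 hy2 => ?_⟩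
      have hp1 : (0:ℝ) < m1 := Nat.cast_pos.mpr (hN.trans_le hm1)
      have hp2 : (0:ℝ) < m2 := Nat.cast_pos.mpr (hN.trans_le hm2)
      have e1 : x - 1/(m1:ℝ) ≤ y.1 := by
        refine le_trans (by gcongr; exact_mod_cast le_max_left m1 m2) hy1
      have e2 : x - 1/(m2:ℝ) ≤ y.1 := by
        refine le_trans (by gcongr; exact_mod_cast le_max_right m1 m2) hy1
      show f.1 y + g.1 y = 0
      rw [h1 y e1 hy2, h2 y e2 hy2, add_zero]
  | smul r f _ ih =>
      obtain ⟨m, hm, h⟩ := ih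
      refine ⟨m, hm, fun y h1 h2 => ?_⟩
      show r.1 y * f.1 y = 0
      rw [h y h1 h2, mul_zero]

set_option maxHeartbeats 1000000 in
/-- For the ideal `I` of `R = C⁰_{b,D,<∞}(D)` generated by the functions `f_n`
(`n ≥ N`, where `1/N < x - a`): (i) every finite subset of `I` has a common zero,
(ii) the members of `I` have no common zero, and (iii) the intersection of the
closures of the zero sets of the members of `I` is `{x}`. -/
theorem span_stepFun_properties (a b x : ℝ) (hab : a < b) (hx : x ∈ Set.Ioo a b)
    (N : ℕ) (hN : 0 < N) (hNx : 1 / (N : ℝ) < x - a) :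
    (∀ J : Set ↥(pcAlg ↥(Set.Icc a b)), J.Finite →
        J ⊆ (Ideal.span {f | ∃ n, N ≤ n ∧ f = stepFun a b x n} :
          Ideal ↥(pcAlg ↥(Set.Icc a b))) →
        (⋂ f ∈ J, {y : ↥(Set.Icc a b) | f.1 y = 0}).Nonempty) ∧
      (⋂ f ∈ (Ideal.span {f | ∃ n, N ≤ n ∧ f = stepFun a b x n} :
          Ideal ↥(pcAlg ↥(Set.Icc a b))),
        {y : ↥(Set.Icc a b) | f.1 y = 0}) = ∅ ∧
      (⋂ f ∈ (Ideal.span {f | ∃ n, N ≤ n ∧ f = stepFun a b x n} :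
          Ideal ↥(pcAlg ↥(Set.Icc a b))),
        closure {y : ↥(Set.Icc a b) | f.1 y = 0}) =
        {(⟨x, Set.Ioo_subset_Icc_self hx⟩ : ↥(Set.Icc a b))} := by
  obtain ⟨hax, hxb⟩ := hx
  set I : Ideal ↥(pcAlg ↥(Set.Icc a b)) :=
    Ideal.span {f | ∃ n, N ≤ n ∧ f = stepFun a b x n} with hI
  have hgen : ∀ n, N ≤ n → stepFun a b x n ∈ I :=
    fun n hn => Ideal.subset_span ⟨n, hn, rfl⟩
  have hpt : ∀ m : ℕ, N ≤ m → x - 1/(m:ℝ) ∈ Set.Icc a b := by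
    intro m hm
    have hp : (0:ℝ) < m := Nat.cast_pos.mpr (hN.trans_le hm)
    have h1 : 1/(m:ℝ) ≤ 1/(N:ℝ) := one_div_le_one_div_of_le (by exact_mod_cast hN) (by exact_mod_cast hm)
    have h2 : (0:ℝ) < 1/(m:ℝ) := by positivity
    exact ⟨by linarith, by linarith⟩
  refine ⟨?_, ?_, ?_⟩
  · -- (i)
    intro J hJfin hJsub
    have key : ∀ f ∈ J, ∃ m : ℕ, N ≤ m ∧
        ∀ y : ↥(Set.Icc a b), x - 1/(m:ℝ) ≤ y.1 → y.1 < x → f.1 y = 0 :=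
      fun f hf => vanish_lemma a b x N hN f (hJsub hf)
    choose! m hm1 hm2 using key
    obtain ⟨M, hM⟩ := (hJfin.image m).bddAbove
    set M' := max M N with hM'
    have hM'N : N ≤ M' := le_max_right _ _
    have hpM : (0:ℝ) < M' := Nat.cast_pos.mpr (hN.trans_le hM'N)
    refine ⟨⟨x - 1/(M':ℝ), hpt M' hM'N⟩, ?_⟩
    simp only [Set.mem_iInter]
    intro f hf
    have hmf : m f ≤ M' := le_trans (hM (Set.mem_image_of_mem m hf)) (le_max_left _ _)
    have hle : (1:ℝ)/(M':ℝ) ≤ 1/(m f : ℝ) :=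
      one_div_le_one_div_of_le (Nat.cast_pos.mpr (hN.trans_le (hm1 f hf)))
        (by exact_mod_cast hmf)
    have hlt : x - 1/(M':ℝ) < x := by
      have : (0:ℝ) < 1/(M':ℝ) := by positivity
      linarith
    exact hm2 f hf _ (by linarith) hlt
  · -- (ii)
    rw [Set.eq_empty_iff_forall_notMem]
    intro y hy
    simp only [Set.mem_iInter] at hy
    by_cases hcase : x - 1/(N:ℝ) ≤ y.1 ∧ y.1 < x
    · obtain ⟨n0, hn0⟩ := exists_nat_one_div_lt (sub_pos.mpr hcase.2)
      set n := max (n0 + 1) N with hn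
      have hnN : N ≤ n := le_max_right _ _
      have h1 : 1/(n:ℝ) ≤ 1/((n0:ℝ)+1) :=
        one_div_le_one_div_of_le (by positivity) (by exact_mod_cast le_max_left _ _)
      have hlt : y.1 < x - 1/(n:ℝ) := by linarith
      have hmem := hy (stepFun a b x n) (hgen n hnN)
      simp only [Set.mem_setOf_eq] at hmem
      have hne : ¬ (x - 1/(n:ℝ) ≤ y.1 ∧ y.1 < x) := fun h => absurd h.1 (not_le.mpr hlt)
      rw [show (stepFun a b x n).1 y =
        (if x - 1/(n:ℝ) ≤ y.1 ∧ y.1 < x then (0:ℝ) else 1) from rfl, if_neg hne] at hmem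
      exact one_ne_zero hmem
    · have hmem := hy (stepFun a b x N) (hgen N le_rfl)
      simp only [Set.mem_setOf_eq] at hmem
      rw [show (stepFun a b x N).1 y =
        (if x - 1/(N:ℝ) ≤ y.1 ∧ y.1 < x then (0:ℝ) else 1) from rfl, if_neg hcase] at hmem
      exact one_ne_zero hmem
  · -- (iii)
    ext y
    simp only [Set.mem_iInter, Set.mem_singleton_iff]
    constructor
    · intro hy
      have hub : ∀ n, N ≤ n → y.1 ∈ Set.Icc (x - 1/(n:ℝ)) x := by
        intro n hn
        have hp : (0:ℝ) < n := Nat.cast_pos.mpr (hN.trans_le hn)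
        have hlt : x - 1/(n:ℝ) < x := by
          have : (0:ℝ) < 1/(n:ℝ) := by positivity
          linarith
        have hsub : {z : ↥(Set.Icc a b) | (stepFun a b x n).1 z = 0} ⊆
            Subtype.val ⁻¹' Set.Ico (x - 1/(n:ℝ)) x := by
          intro z hz
          simp only [Set.mem_setOf_eq] at hz
          simp only [Set.mem_preimage, Set.mem_Ico]
          by_contra hc
          rw [show (stepFun a b x n).1 z =
            (if x - 1/(n:ℝ) ≤ z.1 ∧ z.1 < x then (0:ℝ) else 1) from rfl, if_neg hc] at hz
          exact one_ne_zero hz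
        have h1 := hy (stepFun a b x n) (hgen n hn)
        have h2 : y ∈ closure (Subtype.val ⁻¹' Set.Ico (x - 1/(n:ℝ)) x) :=
          closure_mono hsub h1
        have h3 := (continuous_subtype_val.closure_preimage_subset _) h2
        rw [Set.mem_preimage, closure_Ico hlt.ne] at h3
        exact h3
      have hyx : y.1 = x := by
        have hle : y.1 ≤ x := (hub N le_rfl).2
        rcases lt_or_eq_of_le hle with hlt | heq
        · obtain ⟨n0, hn0⟩ := exists_nat_one_div_lt (sub_pos.mpr hlt)
          set n := max (n0 + 1) N with hn
          have h1 : 1/(n:ℝ) ≤ 1/((n0:ℝ)+1) :=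
            one_div_le_one_div_of_le (by positivity) (by exact_mod_cast le_max_left _ _)
          have := (hub n (le_max_right _ _)).1
          linarith
        · exact heq
      exact Subtype.ext hyx
    · rintro rfl
      intro f hf
      obtain ⟨m, hm, hvan⟩ := vanish_lemma a b x N hN f hf
      have hp : (0:ℝ) < m := Nat.cast_pos.mpr (hN.trans_le hm)
      have h1N : 1/(m:ℝ) ≤ 1/(N:ℝ) :=
        one_div_le_one_div_of_le (by exact_mod_cast hN) (by exact_mod_cast hm)
      have hq : (0:ℝ) < 1/(m:ℝ) := by positivity
      have humem : ∀ k : ℕ, x - (1/(m:ℝ))/((k:ℝ)+1) ∈ Set.Icc a b := by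
        intro k
        have hk1 : (1:ℝ) ≤ (k:ℝ) + 1 := by
          have : (0:ℝ) ≤ (k:ℝ) := Nat.cast_nonneg k
          linarith
        have hdiv : (1/(m:ℝ))/((k:ℝ)+1) ≤ 1/(m:ℝ) := div_le_self hq.le hk1
        have hpos : (0:ℝ) < (1/(m:ℝ))/((k:ℝ)+1) := by positivity
        exact ⟨by linarith, by linarith⟩
      have hzero : ∀ k : ℕ, (⟨x - (1/(m:ℝ))/((k:ℝ)+1), humem k⟩ : ↥(Set.Icc a b)) ∈
          {z : ↥(Set.Icc a b) | f.1 z = 0} := by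
        intro k
        have hk1 : (1:ℝ) ≤ (k:ℝ) + 1 := by
          have : (0:ℝ) ≤ (k:ℝ) := Nat.cast_nonneg k
          linarith
        have hdiv : (1/(m:ℝ))/((k:ℝ)+1) ≤ 1/(m:ℝ) := div_le_self hq.le hk1
        have hpos : (0:ℝ) < (1/(m:ℝ))/((k:ℝ)+1) := by positivity
        refine hvan ⟨_, humem k⟩ ?_ ?_
        · show x - 1/(m:ℝ) ≤ x - (1/(m:ℝ))/((k:ℝ)+1)
          linarith
        · show x - (1/(m:ℝ))/((k:ℝ)+1) < x
          linarith
      have hinner : Filter.Tendsto (fun k : ℕ => (1/(m:ℝ))/((k:ℝ)+1))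
          Filter.atTop (𝓝 0) := by
        have h := tendsto_one_div_add_atTop_nhds_zero_nat.const_mul (1/(m:ℝ))
        simpa [mul_one_div, div_eq_mul_inv] using h
      have key : Filter.Tendsto (fun k : ℕ => x - (1/(m:ℝ))/((k:ℝ)+1))
          Filter.atTop (𝓝 x) := by
        have h := hinner.const_sub x
        rwa [sub_zero] at h
      have htend : Filter.Tendsto
          (fun k : ℕ => (⟨x - (1/(m:ℝ))/((k:ℝ)+1), humem k⟩ : ↥(Set.Icc a b)))
          Filter.atTop (𝓝 ⟨x, Set.Ioo_subset_Icc_self ⟨hax, hxb⟩⟩) := by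
        rw [tendsto_subtype_rng]
        exact key
      exact mem_closure_of_tendsto htend (Filter.Eventually.of_forall hzero)
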